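/- A move in Paintbucket on a connected bipartite graph preserves connectedness and bipartiteness of the resulting graph. -/

import Mathlib

/-- A Paintbucket position: a colored graph on vertex type `V`, with a finite
set of live vertices, a coloring (`true` = black), and a boolean adjacency. -/
structure PB (V : Type) where
  verts : Finset V
  black : V → Bool
  adj : V → V → Bool

namespace PB

variable {V : Type} [DecidableEq V]

/-- The neighbors of `v` among the live vertices. -/
def nbrs (P : PB V) (v : V) : Finset V :=
  P.verts.filter fun w => P.adj v w = true

/-- The move of player `p` (`true` = Black) at vertex `v`: delete the
neighbors of `v`, recolor `v` with the mover's color, and connect `v` to all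
former neighbors of the deleted vertices. -/
def move (p : Bool) (P : PB V) (v : V) : PB V :=
  let del := P.nbrs v
  let vs := insert v (P.verts \ del)
  { verts := vs
    black := fun x => if x = v then p else P.black x
    adj := fun x y =>
      decide (x ∈ vs) && decide (y ∈ vs) && decide (x ≠ y) &&
        (if x = v then P.adj v y || decide (∃ w ∈ del, P.adj w y = true)
         else if y = v then P.adj v x || decide (∃ w ∈ del, P.adj w x = true)
         else P.adj x y) }

/-- Player `p` may move at `v` iff the game is not over (at least two vertices
remain), `v` is live, and `v` has the opponent's color. -/
def legal (p : Bool) (P : PB V) (v : V) : Prop :=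
  1 < P.verts.card ∧ v ∈ P.verts ∧ P.black v = !p

instance (p : Bool) (P : PB V) (v : V) : Decidable (legal p P v) := by
  unfold legal; infer_instance

/-- `blackWinsAux n p P`: with fuel `n` and player `p` to move, Black wins
with optimal play. When the game is over, Black wins iff the remaining vertex
is black. -/
def blackWinsAux : ℕ → Bool → PB V → Prop
  | 0, _, P => ∃ v ∈ P.verts, P.black v = true
  | n + 1, p, P =>
    if P.verts.card ≤ 1 then ∃ v ∈ P.verts, P.black v = true
    else if p then ∃ v, legal true P v ∧ blackWinsAux n false (move true P v)
    else ∀ v, legal false P v → blackWinsAux n true (move false P v)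

/-- Black wins with `p` to move (fuel `P.verts.card` suffices since every move
in a connected position removes at least one vertex). -/
def blackWins (p : Bool) (P : PB V) : Prop :=
  blackWinsAux P.verts.card p P

/-- The coloring is proper: edges join vertices of different colors. -/
def Bipartite (P : PB V) : Prop :=
  ∀ x y, P.adj x y = true → P.black x ≠ P.black y

/-- Any two live vertices are joined by a path. -/
def Connected (P : PB V) : Prop :=
  ∀ x ∈ P.verts, ∀ y ∈ P.verts,
    Relation.ReflTransGen (fun a b => P.adj a b = true) x y

/-- A valid Paintbucket position: symmetric irreflexive adjacency supported on
the live vertices, properly two-colored, and connected. -/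
def Valid (P : PB V) : Prop :=
  (∀ x y, P.adj x y = P.adj y x) ∧
  (∀ x, P.adj x x = false) ∧
  (∀ x y, P.adj x y = true → x ∈ P.verts ∧ y ∈ P.verts) ∧
  P.Bipartite ∧ P.Connected

/-- Isomorphism of colored positions. -/
def Isom {W : Type} (P : PB V) (Q : PB W) : Prop :=
  ∃ f : V → W, Set.BijOn f ↑P.verts ↑Q.verts ∧
    (∀ x ∈ P.verts, Q.black (f x) = P.black x) ∧
    ∀ x ∈ P.verts, ∀ y ∈ P.verts, Q.adj (f x) (f y) = P.adj x y

/-- Play out a list of (player, vertex) moves. -/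
def run (P : PB V) : List (Bool × V) → PB V
  | [] => P
  | m :: ms => run (move m.1 P m.2) ms

/-- All moves in the list are legal when played in order. -/
def legalRun (P : PB V) : List (Bool × V) → Prop
  | [] => True
  | m :: ms => legal m.1 P m.2 ∧ legalRun (move m.1 P m.2) ms

end PB


namespace PB

variable {V : Type} [DecidableEq V]

lemma move_verts (p : Bool) (P : PB V) (v : V) :
    (move p P v).verts = insert v (P.verts \ P.nbrs v) := rfl

lemma move_adj_true_iff (p : Bool) (P : PB V) (v x y : V) :
    (move p P v).adj x y = true ↔
      x ∈ insert v (P.verts \ P.nbrs v) ∧ y ∈ insert v (P.verts \ P.nbrs v) ∧ x ≠ y ∧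
      (if x = v then (P.adj v y = true ∨ ∃ w ∈ P.nbrs v, P.adj w y = true)
       else if y = v then (P.adj v x = true ∨ ∃ w ∈ P.nbrs v, P.adj w x = true)
       else P.adj x y = true) := by
  simp only [move, Bool.and_eq_true, decide_eq_true_eq, and_assoc]
  refine and_congr_right fun _ => and_congr_right fun _ => and_congr_right fun _ => ?_
  split_ifs <;> simp [Bool.or_eq_true]

omit [DecidableEq V] in
lemma mem_nbrs (P : PB V) (v w : V) :
    w ∈ P.nbrs v ↔ w ∈ P.verts ∧ P.adj v w = true := by
  simp [nbrs]

end PB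

open PB in
/-- a Paintbucket move preserves validity, i.e. the resulting
position is again a connected, properly two-colored (bipartite) graph. -/
theorem paintbucket_move_preserves_valid
    {V : Type} [DecidableEq V] (P : PB V) (p : Bool) (v : V)
    (hP : P.Valid) (hv : legal p P v) :
    (move p P v).Valid := by
  obtain ⟨hsymm, hirr, hsupp, hbip, hconn⟩ := hP
  obtain ⟨-, hvmem, hvcol⟩ := hv
  set Q := move p P v with hQ
  have hvS : v ∈ Q.verts := by rw [hQ, move_verts]; exact Finset.mem_insert_self _ _
  have hadj : ∀ x y, Q.adj x y = true ↔
      x ∈ Q.verts ∧ y ∈ Q.verts ∧ x ≠ y ∧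
      (if x = v then (P.adj v y = true ∨ ∃ w ∈ P.nbrs v, P.adj w y = true)
       else if y = v then (P.adj v x = true ∨ ∃ w ∈ P.nbrs v, P.adj w x = true)
       else P.adj x y = true) := fun x y => move_adj_true_iff p P v x y
  have hcsym : ∀ a b : V,
      (if a = v then (P.adj v b = true ∨ ∃ w ∈ P.nbrs v, P.adj w b = true)
       else if b = v then (P.adj v a = true ∨ ∃ w ∈ P.nbrs v, P.adj w a = true)
       else P.adj a b = true) ↔
      (if b = v then (P.adj v a = true ∨ ∃ w ∈ P.nbrs v, P.adj w a = true)
       else if a = v then (P.adj v b = true ∨ ∃ w ∈ P.nbrs v, P.adj w b = true)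
       else P.adj b a = true) := by
    intro a b
    by_cases ha : a = v <;> by_cases hb : b = v
    · rw [if_pos ha, if_pos hb, ha, hb]
    · rw [if_pos ha, if_neg hb, if_pos ha]
    · rw [if_neg ha, if_pos hb, if_pos hb]
    · rw [if_neg ha, if_neg hb, if_neg hb, if_neg ha, hsymm a b]
  have hQsymm : ∀ x y, Q.adj x y = Q.adj y x := by
    intro x y
    rw [Bool.eq_iff_iff, hadj, hadj]
    constructor <;> rintro ⟨h1, h2, h3, h4⟩
    · exact ⟨h2, h1, h3.symm, (hcsym x y).1 h4⟩
    · exact ⟨h2, h1, h3.symm, (hcsym y x).1 h4⟩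
  have hQirr : ∀ x, Q.adj x x = false := by
    intro x
    by_contra h
    have := (hadj x x).1 (by simpa using h)
    exact this.2.2.1 rfl
  have hQsupp : ∀ x y, Q.adj x y = true → x ∈ Q.verts ∧ y ∈ Q.verts := by
    intro x y h
    obtain ⟨h1, h2, -⟩ := (hadj x y).1 h
    exact ⟨h1, h2⟩
  have hQblack : ∀ x, Q.black x = if x = v then p else P.black x := fun x => rfl
  have hwcol : ∀ w ∈ P.nbrs v, P.black w = p := by
    intro w hw
    have := hbip v w ((mem_nbrs P v w).1 hw).2
    rw [hvcol] at this
    cases hb : P.black w <;> cases p <;> simp_all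
  refine ⟨hQsymm, hQirr, hQsupp, ?_, ?_⟩
  · -- bipartite
    intro x y hxy
    obtain ⟨hxS, hyS, hne, hcond⟩ := (hadj x y).1 hxy
    by_cases hx : x = v
    · rw [if_pos hx] at hcond
      have hyv : y ≠ v := fun h => hne (hx.trans h.symm)
      have hyD : y ∉ P.nbrs v := by
        rcases Finset.mem_insert.1 hyS with h | h
        · exact absurd h hyv
        · exact (Finset.mem_sdiff.1 h).2
      have : ∃ w ∈ P.nbrs v, P.adj w y = true := by
        rcases hcond with h | h
        · exact absurd ((mem_nbrs P v y).2 ⟨(hsupp v y h).2, h⟩) hyD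
        · exact h
      obtain ⟨w, hw, hwy⟩ := this
      have h1 : P.black y ≠ p := by
        have := hbip w y hwy
        rw [hwcol w hw] at this
        exact fun h => this h.symm
      rw [hQblack, hQblack, if_pos hx, if_neg hyv]
      exact fun h => h1 h.symm
    · rw [if_neg hx] at hcond
      by_cases hy : y = v
      · rw [if_pos hy] at hcond
        have hxD : x ∉ P.nbrs v := by
          rcases Finset.mem_insert.1 hxS with h | h
          · exact absurd h hx
          · exact (Finset.mem_sdiff.1 h).2
        have : ∃ w ∈ P.nbrs v, P.adj w x = true := by
          rcases hcond with h | h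
          · exact absurd ((mem_nbrs P v x).2 ⟨(hsupp v x h).2, h⟩) hxD
          · exact h
        obtain ⟨w, hw, hwx⟩ := this
        have h1 : P.black x ≠ p := by
          have := hbip w x hwx
          rw [hwcol w hw] at this
          exact fun h => this h.symm
        rw [hQblack, hQblack, if_neg hx, if_pos hy]
        exact h1
      · rw [if_neg hy] at hcond
        rw [hQblack, hQblack, if_neg hx, if_neg hy]
        exact hbip x y hcond
  · -- connected
    have key : ∀ x, Relation.ReflTransGen (fun a b => P.adj a b = true) x v →
        x ∈ Q.verts → Relation.ReflTransGen (fun a b => Q.adj a b = true) x v := by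
      intro x hpath
      induction hpath using Relation.ReflTransGen.head_induction_on with
      | refl => intro _; exact Relation.ReflTransGen.refl
      | head hab _ ih =>
        rename_i a b _
        intro haS
        rcases Finset.mem_insert.1 haS with h | h
        · exact h ▸ Relation.ReflTransGen.refl
        · obtain ⟨haV, haD⟩ := Finset.mem_sdiff.1 h
          by_cases hav : a = v
          · exact hav ▸ Relation.ReflTransGen.refl
          by_cases hbD : b ∈ P.nbrs v
          · refine Relation.ReflTransGen.single ?_
            rw [hadj]
            refine ⟨haS, hvS, hav, ?_⟩
            rw [if_neg hav, if_pos rfl]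
            exact Or.inr ⟨b, hbD, by rw [← hsymm]; exact hab⟩
          · have hbv : b ≠ v := by
              intro h'
              exact haD ((mem_nbrs P v a).2 ⟨haV, by rw [← hsymm]; exact h' ▸ hab⟩)
            have hbV : b ∈ P.verts := (hsupp a b hab).2
            have hbS : b ∈ Q.verts := by
              rw [hQ, move_verts]
              exact Finset.mem_insert_of_mem (Finset.mem_sdiff.2 ⟨hbV, hbD⟩)
            have hab' : Q.adj a b = true := by
              rw [hadj]
              refine ⟨haS, hbS, ?_, ?_⟩
              · rintro rfl; rw [hirr a] at hab; exact Bool.false_ne_true hab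
              · rw [if_neg hav, if_neg hbv]; exact hab
            exact Relation.ReflTransGen.head hab' (ih hbS)
    intro x hx y hy
    have hxv : Relation.ReflTransGen (fun a b => Q.adj a b = true) x v := by
      rcases Finset.mem_insert.1 hx with h | h
      · exact h ▸ Relation.ReflTransGen.refl
      · exact key x (hconn x (Finset.mem_sdiff.1 h).1 v hvmem) hx
    have hyv : Relation.ReflTransGen (fun a b => Q.adj a b = true) y v := by
      rcases Finset.mem_insert.1 hy with h | h
      · exact h ▸ Relation.ReflTransGen.refl
      · exact key y (hconn y (Finset.mem_sdiff.1 h).1 v hvmem) hy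
    have hvy : Relation.ReflTransGen (fun a b => Q.adj a b = true) v y :=
      have : Std.Symm (fun a b => Q.adj a b = true) :=
        ⟨fun a b h => by rw [hQsymm b a]; exact h⟩
      Std.Symm.symm _ _ hyv
    exact hxv.trans hvy
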